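/- In the Fabrykowski–Gupta group Γ ≤ Aut(T_3) generated by a (cyclic rotation of the top three branches) and t (recursively defined by φ(t) = (a, 1, t)), the subgroup K = ⟨at, ta⟩ is a normal subgroup of index 3, and K is torsion-free; hence Γ is virtually torsion-free. -/

import Mathlib

/-- The three-letter alphabet `{0, 1, 2}` of the ternary tree. -/
inductive Three : Type
  | zero : Three
  | one : Three
  | two : Three
deriving DecidableEq, Repr

instance : Fintype Three :=
  ⟨{Three.zero, Three.one, Three.two}, by intro x; cases x <;> decide⟩

/-- The cyclic rotation `s ↦ s + 1` of the alphabet. -/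
def rot : Three → Three
  | .zero => .one
  | .one => .two
  | .two => .zero

/-- The inverse rotation `s ↦ s - 1`. -/
def rotInv : Three → Three
  | .zero => .two
  | .one => .zero
  | .two => .one

/-- The rooted automorphism `a` of the ternary tree: cyclic rotation of the first letter. -/
def raFun : List Three → List Three
  | [] => []
  | s :: t => rot s :: t

def raInvFun : List Three → List Three
  | [] => []
  | s :: t => rotInv s :: t

mutual
  /-- The generator `t` of the Fabrykowski–Gupta group: `φ(t) = (a, 1, t)`. -/
  def rtFun : List Three → List Three
    | [] => []
    | .zero :: r => .zero :: raFun r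
    | .one :: r => .one :: r
    | .two :: r => .two :: rtFun r
  def rtInvFun : List Three → List Three
    | [] => []
    | .zero :: r => .zero :: raInvFun r
    | .one :: r => .one :: r
    | .two :: r => .two :: rtInvFun r
end

theorem ra_left_inv : ∀ l, raInvFun (raFun l) = l := by
  intro l; cases l with
  | nil => rfl
  | cons s r => cases s <;> rfl

theorem ra_right_inv : ∀ l, raFun (raInvFun l) = l := by
  intro l; cases l with
  | nil => rfl
  | cons s r => cases s <;> rfl

theorem rt_left_inv : ∀ l, rtInvFun (rtFun l) = l := by
  intro l
  induction l with
  | nil => rfl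
  | cons s r ih => cases s <;> simp [rtFun, rtInvFun, ra_left_inv r, ih]

theorem rt_right_inv : ∀ l, rtFun (rtInvFun l) = l := by
  intro l
  induction l with
  | nil => rfl
  | cons s r ih => cases s <;> simp [rtFun, rtInvFun, ra_right_inv r, ih]

/-- The generator `a` as a tree automorphism. -/
def ra : Equiv.Perm (List Three) :=
  { toFun := raFun, invFun := raInvFun, left_inv := ra_left_inv, right_inv := ra_right_inv }

/-- The generator `t` as a tree automorphism. -/
def rt : Equiv.Perm (List Three) :=
  { toFun := rtFun, invFun := rtInvFun, left_inv := rt_left_inv, right_inv := rt_right_inv }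

/-- The Fabrykowski–Gupta group `Γ = ⟨a, t⟩`. -/
def fgGamma : Subgroup (Equiv.Perm (List Three)) := Subgroup.closure {ra, rt}

/-- The subgroup `K = ⟨at, ta⟩` of `Γ`. -/
def fgK : Subgroup (Equiv.Perm (List Three)) := Subgroup.closure {ra * rt, rt * ra}


/-! ### Basic infrastructure: local exponents of triangular automorphisms -/

abbrev G3 := Equiv.Perm (List Three)

def num : Three → ZMod 3
  | .zero => 0
  | .one => 1
  | .two => 2

def tp (e : ZMod 3) : Three := if e = 0 then .zero else if e = 1 then .one else .two

/-- `rotPow e` is the rotation `rot` iterated `e` times. -/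
def rotPow (e : ZMod 3) (s : Three) : Three := tp (num s + e)

lemma trich3 : ∀ e : ZMod 3, e = 0 ∨ e = 1 ∨ e = 2 := by decide

lemma rotPow_zero (s : Three) : rotPow 0 s = s := by revert s; decide

lemma rotPow_rotPow (e f : ZMod 3) (s : Three) : rotPow e (rotPow f s) = rotPow (f + e) s := by
  revert e f s; decide

lemma num_rotPow_zero (e : ZMod 3) : num (rotPow e Three.zero) = e := by revert e; decide

def lastL (l : List Three) : Three := l.getLastD Three.zero

lemma lastL_concat (l : List Three) (s : Three) : lastL (l ++ [s]) = s := by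
  simp [lastL]

/-- Local exponent of `g` at the vertex `l`. -/
def EE (g : G3) (l : List Three) : ZMod 3 := num (lastL (g (l ++ [Three.zero])))

/-- `g` is a "triangular" automorphism: it fixes the root and acts on each child of each
vertex by a power of the basic rotation. -/
def Tri (g : G3) : Prop :=
  g [] = [] ∧ ∀ l : List Three, ∃ e : ZMod 3, ∀ s, g (l ++ [s]) = g l ++ [rotPow e s]

lemma EE_spec {g : G3} {l : List Three} {e : ZMod 3}
    (h : g (l ++ [Three.zero]) = g l ++ [rotPow e Three.zero]) : EE g l = e := by
  rw [EE, h, lastL_concat, num_rotPow_zero]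

lemma Tri.app {g : G3} (hg : Tri g) (l : List Three) (s : Three) :
    g (l ++ [s]) = g l ++ [rotPow (EE g l) s] := by
  obtain ⟨e, he⟩ := hg.2 l
  rw [EE_spec (he Three.zero)]
  exact he s

lemma Tri.one : Tri (1 : G3) := by
  refine ⟨rfl, fun l => ⟨0, fun s => ?_⟩⟩
  simp [rotPow_zero]

lemma Tri.mul {g h : G3} (hg : Tri g) (hh : Tri h) : Tri (g * h) := by
  refine ⟨by simp [Equiv.Perm.mul_apply, hh.1, hg.1], fun l => ⟨EE h l + EE g (h l), fun s => ?_⟩⟩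
  simp only [Equiv.Perm.mul_apply]
  rw [hh.app l s, hg.app (h l), rotPow_rotPow]

lemma EE_mul {g h : G3} (hg : Tri g) (hh : Tri h) (l : List Three) :
    EE (g * h) l = EE g (h l) + EE h l := by
  refine EE_spec ?_
  simp only [Equiv.Perm.mul_apply]
  rw [hh.app l, hg.app (h l), rotPow_rotPow, add_comm]

lemma Tri.inv {g : G3} (hg : Tri g) : Tri g⁻¹ := by
  have h0 : g⁻¹ ([] : List Three) = [] := by
    have := hg.1
    conv_lhs => rw [← this]
    simp
  refine ⟨h0, fun l => ⟨-EE g (g⁻¹ l), fun s => ?_⟩⟩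
  have key : g (g⁻¹ l ++ [rotPow (-EE g (g⁻¹ l)) s]) = l ++ [s] := by
    rw [hg.app (g⁻¹ l), rotPow_rotPow]
    simp [rotPow_zero]
  calc g⁻¹ (l ++ [s]) = g⁻¹ (g (g⁻¹ l ++ [rotPow (-EE g (g⁻¹ l)) s])) := by rw [key]
    _ = g⁻¹ l ++ [rotPow (-EE g (g⁻¹ l)) s] := by simp

lemma EE_inv {g : G3} (hg : Tri g) (l : List Three) : EE g⁻¹ l = -EE g (g⁻¹ l) := by
  have key : g (g⁻¹ l ++ [rotPow (-EE g (g⁻¹ l)) Three.zero]) = l ++ [Three.zero] := by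
    rw [hg.app (g⁻¹ l), rotPow_rotPow]
    simp [rotPow_zero]
  refine EE_spec ?_
  calc g⁻¹ (l ++ [Three.zero])
      = g⁻¹ (g (g⁻¹ l ++ [rotPow (-EE g (g⁻¹ l)) Three.zero])) := by rw [key]
    _ = g⁻¹ l ++ [rotPow (-EE g (g⁻¹ l)) Three.zero] := by simp

lemma Tri.pow {g : G3} (hg : Tri g) (n : ℕ) : Tri (g ^ n) := by
  induction n with
  | zero => simpa using Tri.one
  | succ n ih => rw [pow_succ]; exact ih.mul hg

/-! ### The generators are triangular -/

lemma raFun_ex (l : List Three) : ∃ e, ∀ s, raFun (l ++ [s]) = raFun l ++ [rotPow e s] := by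
  cases l with
  | nil => exact ⟨1, fun s => by cases s <;> rfl⟩
  | cons a l => exact ⟨0, fun s => by simp [raFun, rotPow_zero]⟩

lemma rtFun_ex (l : List Three) : ∃ e, ∀ s, rtFun (l ++ [s]) = rtFun l ++ [rotPow e s] := by
  induction l with
  | nil => exact ⟨0, fun s => by cases s <;> simp [rtFun, raFun, rotPow_zero]⟩
  | cons a l ih =>
    cases a with
    | zero =>
      obtain ⟨e, he⟩ := raFun_ex l
      exact ⟨e, fun s => by simp only [List.cons_append, rtFun, List.append_eq, he s]⟩
    | one => exact ⟨0, fun s => by simp [rtFun, rotPow_zero]⟩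
    | two =>
      obtain ⟨e, he⟩ := ih
      exact ⟨e, fun s => by simp only [List.cons_append, rtFun, List.append_eq, he s]⟩

lemma Tri_ra : Tri ra := ⟨rfl, raFun_ex⟩

lemma Tri_rt : Tri rt := ⟨rfl, rtFun_ex⟩

/-! ### The homomorphisms `c`, `ν`, `χ` -/

def cc (g : G3) : ZMod 3 := EE g []

def nu (g : G3) : ZMod 3 := EE g [Three.zero] + EE g [Three.one] + EE g [Three.two]

def chi (g : G3) : ZMod 3 := cc g - nu g

lemma apply_singleton {g : G3} (hg : Tri g) (s : Three) : g [s] = [rotPow (cc g) s] := by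
  have := hg.app [] s
  rwa [hg.1] at this

lemma sum3 (f : Three → ZMod 3) (e : ZMod 3) :
    f (rotPow e Three.zero) + f (rotPow e Three.one) + f (rotPow e Three.two)
      = f Three.zero + f Three.one + f Three.two := by
  rcases trich3 e with h | h | h <;> subst h
  · rw [rotPow_zero, rotPow_zero, rotPow_zero]
  · rw [show rotPow (1 : ZMod 3) Three.zero = Three.one by decide,
      show rotPow (1 : ZMod 3) Three.one = Three.two by decide,
      show rotPow (1 : ZMod 3) Three.two = Three.zero by decide]
    ring
  · rw [show rotPow (2 : ZMod 3) Three.zero = Three.two by decide,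
      show rotPow (2 : ZMod 3) Three.one = Three.zero by decide,
      show rotPow (2 : ZMod 3) Three.two = Three.one by decide]
    ring

lemma cc_one : cc (1 : G3) = 0 := by
  rw [cc, EE_spec (g := 1) (e := 0) (by simp [rotPow_zero])]

lemma nu_one : nu (1 : G3) = 0 := by
  have : ∀ l : List Three, EE (1 : G3) l = 0 := fun l => EE_spec (by simp [rotPow_zero])
  simp [nu, this]

lemma cc_mul {g h : G3} (hg : Tri g) (hh : Tri h) : cc (g * h) = cc g + cc h := by
  rw [cc, EE_mul hg hh, hh.1]; rfl

lemma nu_mul {g h : G3} (hg : Tri g) (hh : Tri h) : nu (g * h) = nu g + nu h := by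
  have key : ∀ s, EE (g * h) [s] = EE g [rotPow (cc h) s] + EE h [s] := by
    intro s
    rw [EE_mul hg hh, apply_singleton hh]
  rw [nu, key, key, key]
  have := sum3 (fun s => EE g [s]) (cc h)
  rw [nu, nu, ← this]
  ring

lemma cc_inv {g : G3} (hg : Tri g) : cc g⁻¹ = -cc g := by
  rw [cc, EE_inv hg, hg.inv.1]; rfl

lemma nu_inv {g : G3} (hg : Tri g) : nu g⁻¹ = -nu g := by
  have key : ∀ s, EE g⁻¹ [s] = -EE g [rotPow (-cc g) s] := by
    intro s
    rw [EE_inv hg]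
    have : g⁻¹ [s] = [rotPow (cc g⁻¹) s] := apply_singleton hg.inv s
    rw [this, cc_inv hg]
  rw [nu, key, key, key]
  have := sum3 (fun s => EE g [s]) (-cc g)
  rw [show (nu g : ZMod 3) = EE g [Three.zero] + EE g [Three.one] + EE g [Three.two] from rfl,
    ← this]
  ring

lemma chi_mul {g h : G3} (hg : Tri g) (hh : Tri h) : chi (g * h) = chi g + chi h := by
  rw [chi, chi, chi, cc_mul hg hh, nu_mul hg hh]; ring

lemma chi_one : chi (1 : G3) = 0 := by rw [chi, cc_one, nu_one]; ring

lemma chi_inv {g : G3} (hg : Tri g) : chi g⁻¹ = -chi g := by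
  rw [chi, chi, cc_inv hg, nu_inv hg]; ring

/-! ### Sections -/

def secFun (g : G3) (s : Three) (r : List Three) : List Three := (g (s :: r)).tail

lemma Tri.cons {g : G3} (hg : Tri g) (s : Three) (r : List Three) :
    g (s :: r) = rotPow (cc g) s :: secFun g s r := by
  suffices h : ∃ u, g (s :: r) = rotPow (cc g) s :: u by
    obtain ⟨u, hu⟩ := h
    show g (s :: r) = rotPow (cc g) s :: (g (s :: r)).tail
    rw [hu]
    rfl
  induction r using List.reverseRecOn with
  | nil => exact ⟨[], apply_singleton hg s⟩
  | append_singleton r s' ih =>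
    obtain ⟨u, hu⟩ := ih
    refine ⟨u ++ [rotPow (EE g (s :: r)) s'], ?_⟩
    have : g ((s :: r) ++ [s']) = g (s :: r) ++ [rotPow (EE g (s :: r)) s'] := hg.app _ _
    simpa [hu] using this

open Classical in
noncomputable def secPerm (s : Three) (g : G3) : G3 :=
  if hg : Tri g then
    { toFun := secFun g s
      invFun := secFun g⁻¹ (rotPow (cc g) s)
      left_inv := by
        intro r
        show (g⁻¹ (rotPow (cc g) s :: (g (s :: r)).tail)).tail = r
        have h1 : rotPow (cc g) s :: (g (s :: r)).tail = g (s :: r) := (hg.cons s r).symm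
        rw [h1]
        simp
      right_inv := by
        intro r
        show (g (s :: (g⁻¹ (rotPow (cc g) s :: r)).tail)).tail = r
        have hhead : rotPow (cc g⁻¹) (rotPow (cc g) s) = s := by
          rw [rotPow_rotPow, cc_inv hg]
          simp [rotPow_zero]
        have h1 : g⁻¹ (rotPow (cc g) s :: r) = s :: secFun g⁻¹ (rotPow (cc g) s) r := by
          rw [hg.inv.cons (rotPow (cc g) s) r, hhead]
        have h2 : (g⁻¹ (rotPow (cc g) s :: r)).tail = secFun g⁻¹ (rotPow (cc g) s) r := by
          rw [h1]
          rfl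
        rw [h2, ← h1]
        simp }
  else 1

lemma secPerm_apply {g : G3} (hg : Tri g) (s : Three) (r : List Three) :
    secPerm s g r = secFun g s r := by
  unfold secPerm
  rw [dif_pos hg]
  rfl

lemma secFun_snoc {g : G3} (hg : Tri g) (s : Three) (l : List Three) (s' : Three) :
    secFun g s (l ++ [s']) = secFun g s l ++ [rotPow (EE g (s :: l)) s'] := by
  show (g (s :: (l ++ [s']))).tail = (g (s :: l)).tail ++ [rotPow (EE g (s :: l)) s']
  have h1 : g ((s :: l) ++ [s']) = g (s :: l) ++ [rotPow (EE g (s :: l)) s'] := hg.app _ _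
  rw [show s :: (l ++ [s']) = (s :: l) ++ [s'] from rfl, h1, hg.cons s l]
  rfl

lemma secFun_nil {g : G3} (hg : Tri g) (s : Three) : secFun g s [] = [] := by
  rw [secFun, apply_singleton hg]
  rfl

lemma Tri_secPerm {g : G3} (hg : Tri g) (s : Three) : Tri (secPerm s g) := by
  constructor
  · rw [secPerm_apply hg]
    exact secFun_nil hg s
  · intro l
    exact ⟨EE g (s :: l), fun s' => by
      rw [secPerm_apply hg, secPerm_apply hg, secFun_snoc hg]⟩

lemma EE_secPerm {g : G3} (hg : Tri g) (s : Three) (l : List Three) :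
    EE (secPerm s g) l = EE g (s :: l) := by
  refine EE_spec ?_
  rw [secPerm_apply hg, secPerm_apply hg, secFun_snoc hg]

lemma cc_secPerm {g : G3} (hg : Tri g) (s : Three) : cc (secPerm s g) = EE g [s] :=
  EE_secPerm hg s []

lemma nu_eq_sum_cc_sec {g : G3} (hg : Tri g) :
    nu g = cc (secPerm Three.zero g) + cc (secPerm Three.one g) + cc (secPerm Three.two g) := by
  rw [cc_secPerm hg, cc_secPerm hg, cc_secPerm hg]; rfl

lemma sec_mul {g h : G3} (hg : Tri g) (hh : Tri h) (s : Three) :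
    secPerm s (g * h) = secPerm (rotPow (cc h) s) g * secPerm s h := by
  apply Equiv.ext
  intro r
  rw [Equiv.Perm.mul_apply, secPerm_apply (hg.mul hh), secPerm_apply hh, secPerm_apply hg]
  show ((g * h) (s :: r)).tail = (g (rotPow (cc h) s :: secFun h s r)).tail
  rw [Equiv.Perm.mul_apply, hh.cons s r]

lemma sec_one (s : Three) : secPerm s (1 : G3) = 1 := by
  apply Equiv.ext
  intro r
  rw [secPerm_apply Tri.one]
  rfl

lemma sec_inv {g : G3} (hg : Tri g) (hc : cc g = 0) (s : Three) :
    secPerm s g⁻¹ = (secPerm s g)⁻¹ := by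
  have h1 : secPerm s (g⁻¹ * g) = secPerm (rotPow (cc g) s) g⁻¹ * secPerm s g :=
    sec_mul hg.inv hg s
  rw [inv_mul_cancel, sec_one, hc, rotPow_zero] at h1
  exact eq_inv_of_mul_eq_one_left h1.symm

lemma trivial_of_secs_trivial {g : G3} (hg : Tri g) (hc : cc g = 0)
    (hs : ∀ s, secPerm s g = 1) : g = 1 := by
  apply Equiv.ext
  intro l
  cases l with
  | nil => exact hg.1
  | cons s r =>
    rw [hg.cons s r, hc, rotPow_zero]
    have : secFun g s r = r := by
      rw [← secPerm_apply hg]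
      rw [hs s]
      rfl
    rw [this]
    rfl

/-! ### Concrete values and basic group identities -/

lemma ra3 : ra ^ 3 = 1 := by
  apply Equiv.ext
  intro l
  show ra (ra (ra l)) = l
  cases l with
  | nil => rfl
  | cons s r => cases s <;> rfl

lemma raFun_cube (l : List Three) : raFun (raFun (raFun l)) = l := by
  cases l with
  | nil => rfl
  | cons s r => cases s <;> rfl

lemma rt3 : rt ^ 3 = 1 := by
  apply Equiv.ext
  intro l
  show rt (rt (rt l)) = l
  show rtFun (rtFun (rtFun l)) = l
  induction l with
  | nil => rfl
  | cons s r ih =>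
    cases s with
    | zero => show Three.zero :: raFun (raFun (raFun r)) = _; rw [raFun_cube]
    | one => rfl
    | two => show Three.two :: rtFun (rtFun (rtFun r)) = _; rw [ih]

lemma ra_mul_mul : ra * (ra * ra) = 1 := by
  have h := ra3
  rw [pow_succ, pow_two, mul_assoc] at h
  exact h

lemma rt_mul_mul : rt * (rt * rt) = 1 := by
  have h := rt3
  rw [pow_succ, pow_two, mul_assoc] at h
  exact h

lemma ra_inv_eq : ra⁻¹ = ra * ra := by
  exact inv_eq_of_mul_eq_one_right ra_mul_mul

lemma rt_inv_eq : rt⁻¹ = rt * rt := by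
  exact inv_eq_of_mul_eq_one_right rt_mul_mul

lemma ra_ra_ra (z : G3) : ra * (ra * (ra * z)) = z := by
  calc ra * (ra * (ra * z)) = (ra * (ra * ra)) * z := by simp only [mul_assoc]
  _ = z := by rw [ra_mul_mul, one_mul]

lemma rt_rt_rt (z : G3) : rt * (rt * (rt * z)) = z := by
  calc rt * (rt * (rt * z)) = (rt * (rt * rt)) * z := by simp only [mul_assoc]
  _ = z := by rw [rt_mul_mul, one_mul]

/-- abbreviations for the generators of `K`. -/
noncomputable abbrev rx : G3 := ra * rt
noncomputable abbrev ry : G3 := rt * ra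

lemma conj_I1 : ra * rx * ra⁻¹ = ry⁻¹ * rx⁻¹ := by
  simp only [rx, ry, mul_inv_rev, ra_inv_eq, rt_inv_eq, mul_assoc, ra_ra_ra, rt_rt_rt,
    ra_mul_mul, rt_mul_mul, one_mul, mul_one]

lemma conj_I2 : ra * ry * ra⁻¹ = rx := by
  simp only [rx, ry, mul_inv_rev, ra_inv_eq, rt_inv_eq, mul_assoc, ra_ra_ra, rt_rt_rt,
    ra_mul_mul, rt_mul_mul, one_mul, mul_one]

lemma conj_I3 : ra⁻¹ * rx * ra = ry := by
  simp only [rx, ry, mul_inv_rev, ra_inv_eq, rt_inv_eq, mul_assoc, ra_ra_ra, rt_rt_rt,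
    ra_mul_mul, rt_mul_mul, one_mul, mul_one]

lemma conj_I4 : ra⁻¹ * ry * ra = ry⁻¹ * rx⁻¹ := by
  simp only [rx, ry, mul_inv_rev, ra_inv_eq, rt_inv_eq, mul_assoc, ra_ra_ra, rt_rt_rt,
    ra_mul_mul, rt_mul_mul, one_mul, mul_one]

lemma conj_I5 : rt * rx * rt⁻¹ = ry := by
  simp only [rx, ry, mul_inv_rev, ra_inv_eq, rt_inv_eq, mul_assoc, ra_ra_ra, rt_rt_rt,
    ra_mul_mul, rt_mul_mul, one_mul, mul_one]

lemma conj_I6 : rt * ry * rt⁻¹ = rx⁻¹ * ry⁻¹ := by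
  simp only [rx, ry, mul_inv_rev, ra_inv_eq, rt_inv_eq, mul_assoc, ra_ra_ra, rt_rt_rt,
    ra_mul_mul, rt_mul_mul, one_mul, mul_one]

lemma conj_I7 : rt⁻¹ * rx * rt = rx⁻¹ * ry⁻¹ := by
  simp only [rx, ry, mul_inv_rev, ra_inv_eq, rt_inv_eq, mul_assoc, ra_ra_ra, rt_rt_rt,
    ra_mul_mul, rt_mul_mul, one_mul, mul_one]

lemma conj_I8 : rt⁻¹ * ry * rt = rx := by
  simp only [rx, ry, mul_inv_rev, ra_inv_eq, rt_inv_eq, mul_assoc, ra_ra_ra, rt_rt_rt,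
    ra_mul_mul, rt_mul_mul, one_mul, mul_one]

/-! ### Membership facts -/

lemma ra_mem_fgGamma : ra ∈ fgGamma := Subgroup.subset_closure (by simp)

lemma rt_mem_fgGamma : rt ∈ fgGamma := Subgroup.subset_closure (by simp)

lemma rx_mem_fgK : rx ∈ fgK := Subgroup.subset_closure (by simp)

lemma ry_mem_fgK : ry ∈ fgK := Subgroup.subset_closure (by simp)

lemma fgK_le_fgGamma : fgK ≤ fgGamma := by
  rw [fgK, Subgroup.closure_le]
  rintro g (rfl | rfl)
  · exact mul_mem ra_mem_fgGamma rt_mem_fgGamma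
  · exact mul_mem rt_mem_fgGamma ra_mem_fgGamma

lemma tri_of_mem_fgGamma {g : G3} (hg : g ∈ fgGamma) : Tri g := by
  induction hg using Subgroup.closure_induction with
  | mem g hgen => rcases hgen with rfl | rfl; exacts [Tri_ra, Tri_rt]
  | one => exact Tri.one
  | mul g h _ _ hg hh => exact hg.mul hh
  | inv g _ hg => exact hg.inv

/-! ### Normality of `K` -/

lemma conj_fgK_of_gens {u : G3} (h1 : u * rx * u⁻¹ ∈ fgK) (h2 : u * ry * u⁻¹ ∈ fgK) :
    ∀ k ∈ fgK, u * k * u⁻¹ ∈ fgK := by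
  intro k hk
  induction hk using Subgroup.closure_induction with
  | mem g hgen => rcases hgen with rfl | rfl; exacts [h1, h2]
  | one => simpa using one_mem fgK
  | mul g h _ _ hg hh =>
    have : u * (g * h) * u⁻¹ = (u * g * u⁻¹) * (u * h * u⁻¹) := by group
    rw [this]; exact mul_mem hg hh
  | inv g _ hg =>
    have : u * g⁻¹ * u⁻¹ = (u * g * u⁻¹)⁻¹ := by group
    rw [this]; exact inv_mem hg

lemma conj_ra_fgK : ∀ k ∈ fgK, ra * k * ra⁻¹ ∈ fgK := by
  refine conj_fgK_of_gens ?_ ?_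
  · rw [conj_I1]; exact mul_mem (inv_mem ry_mem_fgK) (inv_mem rx_mem_fgK)
  · rw [conj_I2]; exact rx_mem_fgK

lemma conj_ra_inv_fgK : ∀ k ∈ fgK, ra⁻¹ * k * ra ∈ fgK := by
  have h := conj_fgK_of_gens (u := ra⁻¹)
  simp only [inv_inv] at h
  refine h ?_ ?_
  · rw [conj_I3]; exact ry_mem_fgK
  · rw [conj_I4]; exact mul_mem (inv_mem ry_mem_fgK) (inv_mem rx_mem_fgK)

lemma conj_rt_fgK : ∀ k ∈ fgK, rt * k * rt⁻¹ ∈ fgK := by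
  refine conj_fgK_of_gens ?_ ?_
  · rw [conj_I5]; exact ry_mem_fgK
  · rw [conj_I6]; exact mul_mem (inv_mem rx_mem_fgK) (inv_mem ry_mem_fgK)

lemma conj_rt_inv_fgK : ∀ k ∈ fgK, rt⁻¹ * k * rt ∈ fgK := by
  have h := conj_fgK_of_gens (u := rt⁻¹)
  simp only [inv_inv] at h
  refine h ?_ ?_
  · rw [conj_I7]; exact mul_mem (inv_mem rx_mem_fgK) (inv_mem ry_mem_fgK)
  · rw [conj_I8]; exact rx_mem_fgK

lemma fgGamma_le_normalizer : fgGamma ≤ Subgroup.normalizer (fgK : Set G3) := by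
  rw [fgGamma, Subgroup.closure_le]
  rintro g (rfl | rfl)
  · rw [SetLike.mem_coe, Subgroup.mem_normalizer_iff]
    intro h
    constructor
    · exact conj_ra_fgK h
    · intro hmem
      have := conj_ra_inv_fgK _ hmem
      have e : ra⁻¹ * (ra * h * ra⁻¹) * ra = h := by group
      rwa [e] at this
  · rw [SetLike.mem_coe, Subgroup.mem_normalizer_iff]
    intro h
    constructor
    · exact conj_rt_fgK h
    · intro hmem
      have := conj_rt_inv_fgK _ hmem
      have e : rt⁻¹ * (rt * h * rt⁻¹) * rt = h := by group
      rwa [e] at this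

lemma conj_mem_fgK {γ k : G3} (hγ : γ ∈ fgGamma) (hk : k ∈ fgK) : γ * k * γ⁻¹ ∈ fgK :=
  ((Subgroup.mem_normalizer_iff.mp (fgGamma_le_normalizer hγ)) k).mp hk

lemma fgK_normal_in_fgGamma : (fgK.subgroupOf fgGamma).Normal := by
  constructor
  intro n hn g
  rw [Subgroup.mem_subgroupOf] at hn ⊢
  push_cast
  exact conj_mem_fgK g.2 hn

/-! ### Values of the invariants on generators -/

lemma cc_ra : cc ra = 1 := by decide
lemma nu_ra : nu ra = 0 := by decide
lemma cc_rt : cc rt = 0 := by decide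
lemma nu_rt : nu rt = 1 := by decide

lemma chi_ra : chi ra = 1 := by rw [chi, cc_ra, nu_ra]; ring
lemma chi_rt : chi rt = -1 := by rw [chi, cc_rt, nu_rt]; ring

/-! ### Powers of `ra` indexed by `ZMod 3` -/

noncomputable def raPow (e : ZMod 3) : G3 := ra ^ e.val

lemma ra_pow_mod (n : ℕ) : ra ^ n = ra ^ (n % 3) := by
  conv_lhs => rw [← Nat.div_add_mod n 3]
  rw [pow_add, pow_mul, ra3, one_pow, one_mul]

lemma raPow_add (e f : ZMod 3) : raPow (e + f) = raPow e * raPow f := by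
  rw [raPow, ZMod.val_add, ← ra_pow_mod, pow_add]
  rfl

lemma raPow_zero : raPow 0 = 1 := by
  rw [raPow, show (0 : ZMod 3).val = 0 from rfl, pow_zero]

lemma raPow_one : raPow 1 = ra := by
  rw [raPow, show (1 : ZMod 3).val = 1 from rfl, pow_one]

lemma raPow_two : raPow 2 = ra * ra := by
  rw [raPow, show (2 : ZMod 3).val = 2 from rfl, pow_two]

lemma raPow_inv (e : ZMod 3) : (raPow e)⁻¹ = raPow (-e) := by
  refine inv_eq_of_mul_eq_one_right ?_
  rw [← raPow_add, add_neg_cancel, raPow_zero]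

lemma Tri_raPow (e : ZMod 3) : Tri (raPow e) := Tri_ra.pow _

lemma raPow_mem_fgGamma (e : ZMod 3) : raPow e ∈ fgGamma := pow_mem ra_mem_fgGamma _

lemma cc_raPow (e : ZMod 3) : cc (raPow e) = e := by
  rcases trich3 e with h | h | h <;> subst h
  · rw [raPow_zero, cc_one]
  · rw [raPow_one, cc_ra]
  · rw [raPow_two, cc_mul Tri_ra Tri_ra, cc_ra]; ring

lemma chi_raPow (e : ZMod 3) : chi (raPow e) = e := by
  rcases trich3 e with h | h | h <;> subst h
  · rw [raPow_zero, chi_one]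
  · rw [raPow_one, chi_ra]
  · rw [raPow_two, chi_mul Tri_ra Tri_ra, chi_ra]; ring

/-! ### `K` is the kernel of `χ` on `Γ` -/

lemma chi_eq_zero_of_mem_fgK {g : G3} (hg : g ∈ fgK) : chi g = 0 := by
  induction hg using Subgroup.closure_induction with
  | mem g hgen =>
    rcases hgen with rfl | rfl
    · rw [chi_mul Tri_ra Tri_rt, chi_ra, chi_rt]; ring
    · rw [chi_mul Tri_rt Tri_ra, chi_ra, chi_rt]; ring
  | one => exact chi_one
  | mul g h hg hh ihg ihh =>
    rw [chi_mul (tri_of_mem_fgGamma (fgK_le_fgGamma hg)) (tri_of_mem_fgGamma (fgK_le_fgGamma hh)),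
      ihg, ihh]; ring
  | inv g hg ihg =>
    rw [chi_inv (tri_of_mem_fgGamma (fgK_le_fgGamma hg)), ihg]; ring

lemma decompose_fgK {g : G3} (hg : g ∈ fgGamma) : ∃ k ∈ fgK, g = k * raPow (chi g) := by
  induction hg using Subgroup.closure_induction with
  | mem g hgen =>
    rcases hgen with rfl | rfl
    · exact ⟨1, one_mem _, by rw [chi_ra, raPow_one, one_mul]⟩
    · refine ⟨rt * ra, ry_mem_fgK, ?_⟩
      rw [chi_rt, show (-1 : ZMod 3) = 2 by decide, raPow_two]
      simp only [mul_assoc, ra_ra_ra, ra_mul_mul, mul_one]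
  | one => exact ⟨1, one_mem _, by rw [chi_one, raPow_zero, one_mul]⟩
  | mul g h hg hh ihg ihh =>
    obtain ⟨k₁, hk₁, e₁⟩ := ihg
    obtain ⟨k₂, hk₂, e₂⟩ := ihh
    have tg := tri_of_mem_fgGamma hg
    have th := tri_of_mem_fgGamma hh
    refine ⟨k₁ * (raPow (chi g) * k₂ * (raPow (chi g))⁻¹),
      mul_mem hk₁ (conj_mem_fgK (raPow_mem_fgGamma _) hk₂), ?_⟩
    rw [chi_mul tg th, raPow_add]
    calc g * h = k₁ * raPow (chi g) * (k₂ * raPow (chi h)) := by rw [← e₁, ← e₂]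
    _ = k₁ * (raPow (chi g) * k₂ * (raPow (chi g))⁻¹) * (raPow (chi g) * raPow (chi h)) := by
        group
  | inv g hg ihg =>
    obtain ⟨k, hk, e⟩ := ihg
    have tg := tri_of_mem_fgGamma hg
    refine ⟨(raPow (chi g))⁻¹ * k⁻¹ * ((raPow (chi g))⁻¹)⁻¹,
      conj_mem_fgK (inv_mem (raPow_mem_fgGamma _)) (inv_mem hk), ?_⟩
    rw [chi_inv tg, ← raPow_inv]
    calc g⁻¹ = (k * raPow (chi g))⁻¹ := by rw [← e]
    _ = (raPow (chi g))⁻¹ * k⁻¹ * ((raPow (chi g))⁻¹)⁻¹ * (raPow (chi g))⁻¹ := by group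

lemma mem_fgK_of_chi_zero {g : G3} (hg : g ∈ fgGamma) (hchi : chi g = 0) : g ∈ fgK := by
  obtain ⟨k, hk, e⟩ := decompose_fgK hg
  rw [hchi, raPow_zero, mul_one] at e
  rwa [e]

/-! ### The relative index is 3 -/

noncomputable def chiHom : fgGamma →* Multiplicative (ZMod 3) where
  toFun g := Multiplicative.ofAdd (chi (g : G3))
  map_one' := by simp [chi_one]
  map_mul' g h := by
    have := chi_mul (tri_of_mem_fgGamma g.2) (tri_of_mem_fgGamma h.2)
    simp only [Subgroup.coe_mul, this]
    rfl

lemma chiHom_ker : chiHom.ker = fgK.subgroupOf fgGamma := by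
  ext g
  rw [MonoidHom.mem_ker, Subgroup.mem_subgroupOf]
  constructor
  · intro h
    have : chi (g : G3) = 0 := by
      have := congrArg Multiplicative.toAdd h
      simpa [chiHom] using this
    exact mem_fgK_of_chi_zero g.2 this
  · intro h
    have : chi (g : G3) = 0 := chi_eq_zero_of_mem_fgK h
    simp [chiHom, this]

lemma chiHom_surjective : Function.Surjective chiHom := by
  intro m
  refine ⟨⟨raPow (Multiplicative.toAdd m), raPow_mem_fgGamma _⟩, ?_⟩
  simp [chiHom, chi_raPow]

lemma relindex_fgK : fgK.relIndex fgGamma = 3 := by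
  have h1 : (fgK.subgroupOf fgGamma).index = 3 := by
    rw [← chiHom_ker, Subgroup.index_ker]
    rw [MonoidHom.range_eq_top_of_surjective _ chiHom_surjective]
    rw [Nat.card_congr Subgroup.topEquiv.toEquiv]
    rw [Nat.card_eq_fintype_card]
    rfl
  exact h1

/-! ### Finite order elements have 3-power order -/

lemma fix_short {g : G3} (hg : Tri g) :
    ∀ m (l : List Three), l.length ≤ m → (g ^ 3 ^ m) l = l := by
  intro m
  induction m generalizing g with
  | zero =>
    intro l hl
    rw [Nat.le_zero, List.length_eq_zero_iff] at hl
    subst hl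
    rw [pow_zero, pow_one]
    exact hg.1
  | succ m ih =>
    intro l hl
    have hpow : g ^ 3 ^ (m + 1) = (g ^ 3 ^ m) ^ 3 := by
      rw [← pow_mul, pow_succ]
    set h := g ^ 3 ^ m with hh
    have th : Tri h := hg.pow _
    have h3 : ∀ l', (g ^ 3 ^ (m+1)) l' = h (h (h l')) := by
      intro l'
      rw [hpow]
      show (h ^ 3) l' = _
      rw [pow_succ, pow_two]
      simp [Equiv.Perm.mul_apply]
    rw [h3]
    rcases Nat.lt_or_ge l.length (m + 1) with hlen | hlen
    · have hfix : h l = l := ih hg l (Nat.lt_succ_iff.mp hlen)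
      rw [hfix, hfix, hfix]
    · -- l.length = m + 1, so l = l' ++ [s] with l'.length ≤ m
      induction l using List.reverseRecOn with
      | nil => simp at hlen
      | append_singleton l' s _ =>
        have hl' : l'.length ≤ m := by
          simp only [List.length_append, List.length_singleton] at hl
          omega
        have hfix : h l' = l' := ih hg l' hl'
        have step : ∀ s', h (l' ++ [s']) = l' ++ [rotPow (EE h l') s'] := by
          intro s'
          rw [th.app l' s', hfix]
        set e := EE h l' with he
        rw [step s, step _, step _, rotPow_rotPow, rotPow_rotPow]
        have : e + (e + e) = 0 := by
          have h3e : e + (e + e) = 3 * e := by ring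
          rw [h3e, show (3 : ZMod 3) = 0 by decide, zero_mul]
        rw [this, rotPow_zero]

lemma pow_fix {X : G3} {l : List Three} (hX : X l = l) : ∀ u : ℕ, (X ^ u) l = l := by
  intro u
  induction u with
  | zero => rfl
  | succ u ih =>
    rw [pow_succ]
    show (X ^ u) (X l) = l
    rw [hX, ih]

lemma orderOf_three_pow {g : G3} (hg : Tri g) (hfin : IsOfFinOrder g) :
    ∃ k, orderOf g = 3 ^ k := by
  set n := orderOf g with hn
  have hn0 : n ≠ 0 := hfin.orderOf_pos.ne'
  set f := n.factorization 3 with hf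
  set m := n / 3 ^ f with hm
  have hsplit : 3 ^ f * m = n := Nat.ordProj_mul_ordCompl_eq_self n 3
  by_cases hm1 : m = 1
  · exact ⟨f, by rw [← hsplit, hm1, mul_one]⟩
  exfalso
  obtain ⟨p, pp, hpm⟩ := Nat.exists_prime_and_dvd hm1
  have h3m : ¬ (3 ∣ m) := Nat.not_dvd_ordCompl (by norm_num) hn0
  have hp3 : p ≠ 3 := by
    rintro rfl
    exact h3m hpm
  have hpn : p ∣ n := hpm.trans ⟨3 ^ f, by rw [← hsplit]; ring⟩
  have hnp0 : n / p ≠ 0 := by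
    have := Nat.div_pos (Nat.le_of_dvd (Nat.pos_of_ne_zero hn0) hpn) pp.pos
    omega
  set h := g ^ (n / p) with hdef
  have horder : orderOf h = p := by
    rw [hdef, orderOf_pow_of_dvd hnp0 (Nat.div_dvd_of_dvd hpn), ← hn,
      Nat.div_div_self hpn hn0]
  have hne1 : h ≠ 1 := by
    intro h1
    rw [h1, orderOf_one] at horder
    exact pp.one_lt.ne' horder.symm
  have : ∃ l, h l ≠ l := by
    by_contra hc
    push_neg at hc
    exact hne1 (Equiv.ext hc)
  obtain ⟨l, hl⟩ := this
  have th : Tri h := hg.pow _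
  have hfix : (h ^ 3 ^ l.length) l = l := fix_short th l.length l le_rfl
  have hcop : (Nat.Coprime (3 ^ l.length) p) := by
    have : Nat.Coprime 3 p := (Nat.coprime_primes (by norm_num) pp).mpr (fun h => hp3 h.symm)
    exact this.pow_left _
  obtain ⟨u, -, hu⟩ := Nat.exists_mul_mod_eq_one_of_coprime hcop pp.one_lt
  have key : h = h ^ (3 ^ l.length * u) := by
    conv_lhs => rw [← pow_one h]
    rw [← hu, ← horder, pow_mod_orderOf]
  have : h l = l := by
    rw [key, pow_mul]
    exact pow_fix hfix u
  exact hl this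

lemma exists_cube_root_problem {g : G3} (hg : Tri g) (hfin : IsOfFinOrder g) (hne : g ≠ 1) :
    ∃ nn : ℕ, g ^ nn ≠ 1 ∧ (g ^ nn) ^ 3 = 1 := by
  obtain ⟨k, hk⟩ := orderOf_three_pow hg hfin
  have hk0 : k ≠ 0 := by
    rintro rfl
    rw [pow_zero, orderOf_eq_one_iff] at hk
    exact hne hk
  refine ⟨3 ^ (k - 1), ?_, ?_⟩
  · intro h1
    rw [← orderOf_dvd_iff_pow_eq_one, hk] at h1
    have hle := Nat.le_of_dvd (Nat.pow_pos (by norm_num)) h1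
    have := (Nat.pow_le_pow_iff_right (by norm_num : 1 < 3)).mp hle
    omega
  · rw [← pow_mul]
    have hexp : 3 ^ (k - 1) * 3 = 3 ^ k := by
      rw [← pow_succ]
      congr 1
      omega
    rw [hexp, ← hk]
    exact pow_orderOf_eq_one g

/-! ### Sections of the generators -/

lemma sec_ra (s : Three) : secPerm s ra = 1 := by
  apply Equiv.ext
  intro r
  rw [secPerm_apply Tri_ra]
  show (ra (s :: r)).tail = r
  rfl

lemma sec_ra_powNat (n : ℕ) (s : Three) : secPerm s (ra ^ n) = 1 := by
  induction n generalizing s with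
  | zero => simpa using sec_one s
  | succ n ih =>
    rw [pow_succ, sec_mul (Tri_ra.pow n) Tri_ra, sec_ra, ih, one_mul]

lemma sec_raPow (e : ZMod 3) (s : Three) : secPerm s (raPow e) = 1 := sec_ra_powNat _ s

lemma sec_raPow_inv (e : ZMod 3) (s : Three) : secPerm s (raPow e)⁻¹ = 1 := by
  rw [raPow_inv]; exact sec_raPow _ s

lemma sec_rt_zero : secPerm Three.zero rt = ra := by
  apply Equiv.ext
  intro r
  rw [secPerm_apply Tri_rt]
  show (rt (Three.zero :: r)).tail = ra r
  rfl

lemma sec_rt_one : secPerm Three.one rt = 1 := by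
  apply Equiv.ext
  intro r
  rw [secPerm_apply Tri_rt]
  show (rt (Three.one :: r)).tail = r
  rfl

lemma sec_rt_two : secPerm Three.two rt = rt := by
  apply Equiv.ext
  intro r
  rw [secPerm_apply Tri_rt]
  show (rt (Three.two :: r)).tail = rt r
  rfl

/-! ### The stabilized generators `c_k = a^k t a^{-k}` -/

noncomputable def cElt (k : ZMod 3) : G3 := raPow k * rt * (raPow k)⁻¹

lemma Tri_cElt (k : ZMod 3) : Tri (cElt k) :=
  ((Tri_raPow k).mul Tri_rt).mul (Tri_raPow k).inv

lemma cc_cElt (k : ZMod 3) : cc (cElt k) = 0 := by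
  rw [cElt, cc_mul ((Tri_raPow k).mul Tri_rt) (Tri_raPow k).inv,
    cc_mul (Tri_raPow k) Tri_rt, cc_raPow, cc_rt, cc_inv (Tri_raPow k), cc_raPow]
  ring

lemma chi_cElt (k : ZMod 3) : chi (cElt k) = -1 := by
  rw [cElt, chi_mul ((Tri_raPow k).mul Tri_rt) (Tri_raPow k).inv,
    chi_mul (Tri_raPow k) Tri_rt, chi_raPow, chi_rt, chi_inv (Tri_raPow k), chi_raPow]
  ring

lemma cElt_mem_fgGamma (k : ZMod 3) : cElt k ∈ fgGamma :=
  mul_mem (mul_mem (raPow_mem_fgGamma k) rt_mem_fgGamma) (inv_mem (raPow_mem_fgGamma k))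

lemma conj_cube (u v : G3) : (u * v * u⁻¹) ^ 3 = u * v ^ 3 * u⁻¹ := by
  simp only [pow_succ, pow_zero, one_mul]
  group

lemma cElt_cube (k : ZMod 3) : cElt k ^ 3 = 1 := by
  rw [cElt, conj_cube, rt3, mul_one, mul_inv_cancel]

lemma sec_cElt (k : ZMod 3) (s : Three) :
    secPerm s (cElt k) = secPerm (rotPow (-k) s) rt := by
  have h1 : cElt k = raPow k * (rt * (raPow k)⁻¹) := by rw [cElt, mul_assoc]
  have hcc : cc (rt * (raPow k)⁻¹) = -k := by
    rw [cc_mul Tri_rt (Tri_raPow k).inv, cc_rt, cc_inv (Tri_raPow k), cc_raPow, zero_add]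
  rw [h1, sec_mul (Tri_raPow k) (Tri_rt.mul (Tri_raPow k).inv), hcc, sec_raPow, one_mul,
    sec_mul Tri_rt (Tri_raPow k).inv, cc_inv (Tri_raPow k), cc_raPow, sec_raPow_inv, mul_one]

/-! ### Words in the generators -/

inductive Ltr : Type
  | A | A' | T | T'
deriving DecidableEq

noncomputable def evalL : Ltr → G3
  | .A => ra
  | .A' => ra⁻¹
  | .T => rt
  | .T' => rt⁻¹

noncomputable def evalW (w : List Ltr) : G3 := (w.map evalL).prod

lemma evalW_nil : evalW [] = 1 := rfl

lemma evalW_cons (l : Ltr) (w : List Ltr) : evalW (l :: w) = evalL l * evalW w := by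
  simp [evalW]

lemma evalW_append (w₁ w₂ : List Ltr) : evalW (w₁ ++ w₂) = evalW w₁ * evalW w₂ := by
  simp [evalW]

lemma Tri_evalL (l : Ltr) : Tri (evalL l) := by
  cases l
  exacts [Tri_ra, Tri_ra.inv, Tri_rt, Tri_rt.inv]

lemma Tri_evalW (w : List Ltr) : Tri (evalW w) := by
  induction w with
  | nil => exact Tri.one
  | cons l w ih => rw [evalW_cons]; exact (Tri_evalL l).mul ih

lemma evalL_mem_fgGamma (l : Ltr) : evalL l ∈ fgGamma := by
  cases l
  exacts [ra_mem_fgGamma, inv_mem ra_mem_fgGamma, rt_mem_fgGamma, inv_mem rt_mem_fgGamma]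

lemma evalW_mem_fgGamma (w : List Ltr) : evalW w ∈ fgGamma := by
  induction w with
  | nil => exact one_mem _
  | cons l w ih => rw [evalW_cons]; exact mul_mem (evalL_mem_fgGamma l) ih

def flipL : Ltr → Ltr
  | .A => .A'
  | .A' => .A
  | .T => .T'
  | .T' => .T

lemma evalL_flipL (l : Ltr) : evalL (flipL l) = (evalL l)⁻¹ := by
  cases l <;> simp [flipL, evalL]

lemma evalW_inv (w : List Ltr) : evalW ((w.map flipL).reverse) = (evalW w)⁻¹ := by
  induction w with
  | nil => simp [evalW]
  | cons l w ih =>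
    rw [evalW_cons, mul_inv_rev, ← ih]
    simp only [List.map_cons, List.reverse_cons]
    rw [evalW_append, evalW_cons, evalW_nil, mul_one, evalL_flipL]

lemma exists_word {g : G3} (hg : g ∈ fgGamma) : ∃ w : List Ltr, evalW w = g := by
  induction hg using Subgroup.closure_induction with
  | mem g hgen =>
    rcases hgen with rfl | rfl
    · exact ⟨[Ltr.A], by rw [evalW_cons, evalW_nil, mul_one]; rfl⟩
    · exact ⟨[Ltr.T], by rw [evalW_cons, evalW_nil, mul_one]; rfl⟩
  | one => exact ⟨[], rfl⟩
  | mul g h _ _ ihg ihh =>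
    obtain ⟨w₁, hw₁⟩ := ihg
    obtain ⟨w₂, hw₂⟩ := ihh
    exact ⟨w₁ ++ w₂, by rw [evalW_append, hw₁, hw₂]⟩
  | inv g _ ihg =>
    obtain ⟨w, hw⟩ := ihg
    exact ⟨(w.map flipL).reverse, by rw [evalW_inv, hw]⟩

def isTL : Ltr → Bool
  | .T => true
  | .T' => true
  | _ => false

def tcount (w : List Ltr) : ℕ := w.countP isTL

def aval : Ltr → ZMod 3
  | .A => 1
  | .A' => -1
  | .T => 0
  | .T' => 0

def asum (w : List Ltr) : ZMod 3 := (w.map aval).sum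

lemma cc_evalW (w : List Ltr) : cc (evalW w) = asum w := by
  induction w with
  | nil => simp [evalW, asum, cc_one]
  | cons l w ih =>
    rw [evalW_cons, cc_mul (Tri_evalL l) (Tri_evalW w), ih]
    have : cc (evalL l) = aval l := by
      cases l
      · exact cc_ra
      · rw [evalL, cc_inv Tri_ra, cc_ra]; rfl
      · exact cc_rt
      · rw [evalL, cc_inv Tri_rt, cc_rt]; rfl
    rw [this, asum, asum, List.map_cons, List.sum_cons]

/-! ### Rewriting words over the stabilized alphabet -/

noncomputable def evalCL (p : ZMod 3 × Bool) : G3 := if p.2 then cElt p.1 else (cElt p.1)⁻¹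

noncomputable def evalC (M : List (ZMod 3 × Bool)) : G3 := (M.map evalCL).prod

lemma evalC_nil : evalC [] = 1 := rfl

lemma evalC_cons (p : ZMod 3 × Bool) (M : List (ZMod 3 × Bool)) :
    evalC (p :: M) = evalCL p * evalC M := by simp [evalC]

lemma Tri_evalCL (p : ZMod 3 × Bool) : Tri (evalCL p) := by
  rw [evalCL]
  split
  · exact Tri_cElt p.1
  · exact (Tri_cElt p.1).inv

lemma cc_evalCL (p : ZMod 3 × Bool) : cc (evalCL p) = 0 := by
  rw [evalCL]
  split
  · exact cc_cElt p.1
  · rw [cc_inv (Tri_cElt p.1), cc_cElt]; ring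

lemma Tri_evalC (M : List (ZMod 3 × Bool)) : Tri (evalC M) := by
  induction M with
  | nil => exact Tri.one
  | cons p M ih => rw [evalC_cons]; exact (Tri_evalCL p).mul ih

lemma cc_evalC (M : List (ZMod 3 × Bool)) : cc (evalC M) = 0 := by
  induction M with
  | nil => exact cc_one
  | cons p M ih =>
    rw [evalC_cons, cc_mul (Tri_evalCL p) (Tri_evalC M), cc_evalCL, ih]; ring

noncomputable def convert : List Ltr → ZMod 3 → List (ZMod 3 × Bool)
  | [], _ => []
  | .A :: w, k => convert w (k + 1)
  | .A' :: w, k => convert w (k - 1)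
  | .T :: w, k => (k, true) :: convert w k
  | .T' :: w, k => (k, false) :: convert w k

lemma length_convert (w : List Ltr) : ∀ k, (convert w k).length = tcount w := by
  induction w with
  | nil => intro k; rfl
  | cons l w ih =>
    intro k
    cases l <;> simp [convert, tcount, List.countP_cons, isTL, ih]

lemma conv_eval (w : List Ltr) : ∀ k, raPow k * evalW w = evalC (convert w k) * raPow (k + asum w) := by
  induction w with
  | nil =>
    intro k
    rw [evalW_nil, convert, evalC_nil, asum, List.map_nil, List.sum_nil, add_zero, mul_one, one_mul]
  | cons l w ih =>
    intro k
    have hasum : asum (l :: w) = aval l + asum w := by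
      rw [asum, asum, List.map_cons, List.sum_cons]
    cases l with
    | A =>
      rw [evalW_cons, convert]
      have h1 : raPow k * (evalL Ltr.A * evalW w) = raPow (k + 1) * evalW w := by
        rw [raPow_add, raPow_one, mul_assoc]; rfl
      rw [h1, ih (k + 1), hasum]
      congr 2
      rw [aval]
      ring
    | A' =>
      rw [evalW_cons, convert]
      have h1 : raPow k * (evalL Ltr.A' * evalW w) = raPow (k - 1) * evalW w := by
        have : raPow (k - 1) = raPow k * raPow (-1) := by
          rw [← raPow_add]; congr 1; ring
        rw [this, ← raPow_inv, raPow_one, mul_assoc]; rfl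
      rw [h1, ih (k - 1), hasum]
      congr 2
      rw [aval]
      ring
    | T =>
      rw [evalW_cons, convert, evalC_cons]
      have h1 : raPow k * (evalL Ltr.T * evalW w) = cElt k * (raPow k * evalW w) := by
        rw [cElt]
        show raPow k * (rt * evalW w) = _
        group
      rw [h1, ih k, hasum]
      have : evalCL (k, true) = cElt k := rfl
      rw [this, aval, zero_add, mul_assoc]
    | T' =>
      rw [evalW_cons, convert, evalC_cons]
      have h1 : raPow k * (evalL Ltr.T' * evalW w) = (cElt k)⁻¹ * (raPow k * evalW w) := by
        rw [cElt]
        show raPow k * (rt⁻¹ * evalW w) = _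
        group
      rw [h1, ih k, hasum]
      have : evalCL (k, false) = (cElt k)⁻¹ := rfl
      rw [this, aval, zero_add, mul_assoc]

lemma eval_eq_evalC {w : List Ltr} (hc : cc (evalW w) = 0) : evalW w = evalC (convert w 0) := by
  have h := conv_eval w 0
  rw [cc_evalW] at hc
  rw [hc, zero_add, raPow_zero, one_mul, mul_one] at h
  exact h

/-! ### Section words -/

def secLtr (k : ZMod 3) (b : Bool) (s : Three) : List Ltr :=
  match rotPow (-k) s with
  | .zero => [if b then Ltr.A else Ltr.A']
  | .one => []
  | .two => [if b then Ltr.T else Ltr.T']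

def secW (s : Three) : List (ZMod 3 × Bool) → List Ltr
  | [] => []
  | p :: M => secLtr p.1 p.2 s ++ secW s M

lemma sec_letter (k : ZMod 3) (b : Bool) (s : Three) :
    secPerm s (evalCL (k, b)) = evalW (secLtr k b s) := by
  cases b with
  | true =>
    have h : evalCL (k, true) = cElt k := rfl
    rw [h, sec_cElt, secLtr]
    cases hm : rotPow (-k) s with
    | zero => rw [sec_rt_zero]; simp [evalW, evalL]
    | one => rw [sec_rt_one]; rfl
    | two => rw [sec_rt_two]; simp [evalW, evalL]
  | false =>
    have h : evalCL (k, false) = (cElt k)⁻¹ := rfl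
    rw [h, sec_inv (Tri_cElt k) (cc_cElt k), sec_cElt, secLtr]
    cases hm : rotPow (-k) s with
    | zero => rw [sec_rt_zero]; simp [evalW, evalL]
    | one => rw [sec_rt_one]; simp [evalW]
    | two => rw [sec_rt_two]; simp [evalW, evalL]

lemma sec_evalC (M : List (ZMod 3 × Bool)) (s : Three) :
    secPerm s (evalC M) = evalW (secW s M) := by
  induction M with
  | nil => rw [evalC_nil, secW, evalW_nil, sec_one]
  | cons p M ih =>
    rw [evalC_cons, sec_mul (Tri_evalCL p) (Tri_evalC M), cc_evalC, rotPow_zero, secW,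
      evalW_append, ih]
    congr 1
    obtain ⟨k, b⟩ := p
    exact sec_letter k b s

lemma tcount_append (w₁ w₂ : List Ltr) : tcount (w₁ ++ w₂) = tcount w₁ + tcount w₂ :=
  List.countP_append

lemma tcount_secLtr (k : ZMod 3) (b : Bool) (s : Three) :
    tcount (secLtr k b s) = if rotPow (-k) s = Three.two then 1 else 0 := by
  rw [secLtr]
  cases hm : rotPow (-k) s with
  | zero => cases b <;> rfl
  | one => rfl
  | two => cases b <;> rfl

lemma tcount_secW (s : Three) (M : List (ZMod 3 × Bool)) :
    tcount (secW s M) = M.countP (fun p => decide (rotPow (-p.1) s = Three.two)) := by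
  induction M with
  | nil => rfl
  | cons p M ih =>
    rw [secW, tcount_append, ih, List.countP_cons, tcount_secLtr]
    by_cases hp : rotPow (-p.1) s = Three.two
    · simp [hp, Nat.add_comm]
    · simp [hp]

lemma countP_lt_length {α : Type*} {l : List α} {p : α → Bool} (h : ∃ a ∈ l, ¬ p a) :
    l.countP p < l.length := by
  refine lt_of_le_of_ne List.countP_le_length ?_
  intro he
  obtain ⟨a, ha, hpa⟩ := h
  exact hpa (List.countP_eq_length.mp he a ha)

lemma rotPow_neg_eq_two_iff : ∀ (k : ZMod 3) (s : Three),
    rotPow (-k) s = Three.two ↔ k = num s + 1 := by decide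

lemma tcount_secW_lt {s : Three} {M : List (ZMod 3 × Bool)}
    (h : ¬ ∃ k₀, ∀ p ∈ M, p.1 = k₀) :
    tcount (secW s M) < M.length := by
  rw [tcount_secW]
  refine countP_lt_length ?_
  push_neg at h
  obtain ⟨p, hp, hne⟩ := h (num s + 1)
  exact ⟨p, hp, by simpa using fun hc => hne ((rotPow_neg_eq_two_iff p.1 s).mp hc)⟩

/-! ### The key cube lemma: if `g³ = 1` and `g` is active at the root, then `ν g = 0` -/

lemma cube_expand (g : G3) : g ^ 3 = g * (g * g) := by
  rw [pow_succ, pow_two, mul_assoc]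

lemma cube_nu_zero {g : G3} (hg : Tri g) (h3 : g ^ 3 = 1) (hc : cc g ≠ 0) : nu g = 0 := by
  have hmul : g * (g * g) = 1 := by rw [← cube_expand, h3]
  have hcgg : cc (g * g) = cc g + cc g := cc_mul hg hg
  have hsec : ∀ s : Three,
      secPerm (rotPow (cc g + cc g) s) g * (secPerm (rotPow (cc g) s) g * secPerm s g) = 1 := by
    intro s
    have h1 : secPerm s (g * (g * g)) =
        secPerm (rotPow (cc (g * g)) s) g * secPerm s (g * g) := sec_mul hg (hg.mul hg) s
    have h2 : secPerm s (g * g) = secPerm (rotPow (cc g) s) g * secPerm s g := sec_mul hg hg s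
    rw [h2, hcgg] at h1
    rw [← h1, hmul, sec_one]
  have hccsum : ∀ s : Three,
      EE g [rotPow (cc g + cc g) s] + (EE g [rotPow (cc g) s] + EE g [s]) = 0 := by
    intro s
    have := congrArg cc (hsec s)
    rwa [cc_mul (Tri_secPerm hg _) ((Tri_secPerm hg _).mul (Tri_secPerm hg _)),
      cc_mul (Tri_secPerm hg _) (Tri_secPerm hg _), cc_secPerm hg, cc_secPerm hg,
      cc_secPerm hg, cc_one] at this
  have key := hccsum Three.zero
  rcases trich3 (cc g) with h | h | h
  · exact absurd h hc
  · rw [h] at key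
    rw [show rotPow ((1 : ZMod 3) + 1) Three.zero = Three.two by decide,
      show rotPow (1 : ZMod 3) Three.zero = Three.one by decide] at key
    rw [nu]
    rw [show (EE g [Three.zero] + EE g [Three.one] + EE g [Three.two] : ZMod 3)
      = EE g [Three.two] + (EE g [Three.one] + EE g [Three.zero]) by ring]
    exact key
  · rw [h] at key
    rw [show rotPow ((2 : ZMod 3) + 2) Three.zero = Three.one by decide,
      show rotPow (2 : ZMod 3) Three.zero = Three.two by decide] at key
    rw [nu]
    rw [show (EE g [Three.zero] + EE g [Three.one] + EE g [Three.two] : ZMod 3)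
      = EE g [Three.one] + (EE g [Three.two] + EE g [Three.zero]) by ring]
    exact key

/-! ### The structural relation for sections of stabilized elements of `Γ` -/

def Dprop (g : G3) : Prop :=
  Tri g ∧ cc g = 0 ∧ ∀ s, chi (secPerm s g) = EE g [s] - EE g [rot s]

lemma Dprop_mul {g h : G3} (hg : Dprop g) (hh : Dprop h) : Dprop (g * h) := by
  obtain ⟨tg, cg, rg⟩ := hg
  obtain ⟨th, ch, rh⟩ := hh
  refine ⟨tg.mul th, by rw [cc_mul tg th, cg, ch]; ring, fun s => ?_⟩
  have hsec : secPerm s (g * h) = secPerm s g * secPerm s h := by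
    rw [sec_mul tg th, ch, rotPow_zero]
  have hE : ∀ s', EE (g * h) [s'] = EE g [s'] + EE h [s'] := by
    intro s'
    rw [EE_mul tg th, apply_singleton th, ch, rotPow_zero]
  rw [hsec, chi_mul (Tri_secPerm tg s) (Tri_secPerm th s), rg s, rh s, hE, hE]
  ring

lemma Dprop_inv {g : G3} (hg : Dprop g) : Dprop g⁻¹ := by
  obtain ⟨tg, cg, rg⟩ := hg
  have hcinv : cc g⁻¹ = 0 := by rw [cc_inv tg, cg]; ring
  refine ⟨tg.inv, hcinv, fun s => ?_⟩
  have hsec : secPerm s g⁻¹ = (secPerm s g)⁻¹ := sec_inv tg cg s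
  have hE : ∀ s', EE g⁻¹ [s'] = -EE g [s'] := by
    intro s'
    rw [EE_inv tg, apply_singleton tg.inv, hcinv, rotPow_zero]
  rw [hsec, chi_inv (Tri_secPerm tg s), rg s, hE, hE]
  ring

lemma Dprop_one : Dprop 1 := by
  refine ⟨Tri.one, cc_one, fun s => ?_⟩
  have hE : ∀ s', EE (1 : G3) [s'] = 0 := fun s' => EE_spec (by simp [rotPow_zero])
  rw [sec_one, chi_one, hE, hE]
  ring

lemma rotPow_neg_rot (k : ZMod 3) (s : Three) : rotPow (-k) (rot s) = rot (rotPow (-k) s) := by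
  revert k s; decide

lemma Dprop_cElt (k : ZMod 3) : Dprop (cElt k) := by
  refine ⟨Tri_cElt k, cc_cElt k, fun s => ?_⟩
  have hsec := sec_cElt k
  have hE : ∀ s', EE (cElt k) [s'] = cc (secPerm s' (cElt k)) :=
    fun s' => (cc_secPerm (Tri_cElt k) s').symm
  rw [hE, hE, hsec s, hsec (rot s)]
  rw [rotPow_neg_rot]
  cases hm : rotPow (-k) s with
  | zero =>
    rw [show rot Three.zero = Three.one from rfl, sec_rt_zero, sec_rt_one, chi_ra, cc_ra, cc_one]
    ring
  | one =>
    rw [show rot Three.one = Three.two from rfl, sec_rt_one, sec_rt_two, chi_one, cc_one, cc_rt]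
    ring
  | two =>
    rw [show rot Three.two = Three.zero from rfl, sec_rt_two, sec_rt_zero, chi_rt, cc_rt, cc_ra]
    ring

lemma Dprop_evalCL (p : ZMod 3 × Bool) : Dprop (evalCL p) := by
  rw [evalCL]
  split
  · exact Dprop_cElt p.1
  · exact Dprop_inv (Dprop_cElt p.1)

lemma Dprop_evalC (M : List (ZMod 3 × Bool)) : Dprop (evalC M) := by
  induction M with
  | nil => rw [evalC_nil]; exact Dprop_one
  | cons p M ih => rw [evalC_cons]; exact Dprop_mul (Dprop_evalCL p) ih

/-! ### Powers of `χ` -/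

lemma chi_pow {g : G3} (hg : Tri g) (n : ℕ) : chi (g ^ n) = (n : ZMod 3) * chi g := by
  induction n with
  | zero => simp [chi_one]
  | succ n ih =>
    rw [pow_succ, chi_mul (hg.pow n) hg, ih]
    push_cast
    ring

lemma chi_zpow {g : G3} (hg : Tri g) (z : ℤ) : chi (g ^ z) = (z : ZMod 3) * chi g := by
  cases z with
  | ofNat n => rw [Int.ofNat_eq_coe, zpow_natCast, chi_pow hg]; push_cast; ring
  | negSucc n =>
    rw [zpow_negSucc, chi_inv (hg.pow (n + 1)), chi_pow hg]
    push_cast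
    ring

/-! ### The case where all stabilized letters agree -/

lemma all_equal_case {M : List (ZMod 3 × Bool)} {k₀ : ZMod 3}
    (hall : ∀ p ∈ M, p.1 = k₀) (hchi : chi (evalC M) = 0) : evalC M = 1 := by
  have hmem : ∀ N : List (ZMod 3 × Bool), (∀ p ∈ N, p.1 = k₀) →
      evalC N ∈ Subgroup.closure {cElt k₀} := by
    intro N
    induction N with
    | nil => exact fun _ => one_mem _
    | cons p N ih =>
      intro hallN
      rw [evalC_cons]
      refine mul_mem ?_ (ih (fun q hq => hallN q (List.mem_cons_of_mem p hq)))
      have hk : p.1 = k₀ := hallN p List.mem_cons_self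
      rw [evalCL, hk]
      split
      · exact Subgroup.subset_closure rfl
      · exact inv_mem (Subgroup.subset_closure rfl)
  obtain ⟨z, hz⟩ := Subgroup.mem_closure_singleton.mp (hmem M hall)
  rw [← hz] at hchi ⊢
  rw [chi_zpow (Tri_cElt k₀) z, chi_cElt] at hchi
  have hz3 : ((3 : ℕ) : ℤ) ∣ z := by
    rw [← ZMod.intCast_zmod_eq_zero_iff_dvd]
    have : (z : ZMod 3) = 0 := by
      have h' : -(z : ZMod 3) = 0 := by rw [← hchi]; ring
      linear_combination -h'
    exact this
  obtain ⟨v, hv⟩ := hz3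
  rw [hv, zpow_mul, show ((3:ℕ):ℤ) = (3:ℤ) from rfl, show (3:ℤ) = ((3:ℕ):ℤ) from rfl,
    zpow_natCast, cElt_cube, one_zpow]

/-! ### The main induction: elements of `K` of order dividing 3 are trivial -/

lemma zmod3_vanish : ∀ v0 v1 v2 : ZMod 3, v0 + v1 + v2 = 0 → (v0 ≠ 0 → v1 = 0) →
    (v1 ≠ 0 → v2 = 0) → (v2 ≠ 0 → v0 = 0) → v0 = 0 ∧ v1 = 0 ∧ v2 = 0 := by
  have key : ∀ v0 v1 v2 : ZMod 3, (v0 + v1 + v2 = 0 ∧ (v0 = 0 ∨ v1 = 0) ∧ (v1 = 0 ∨ v2 = 0)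
      ∧ (v2 = 0 ∨ v0 = 0)) → v0 = 0 ∧ v1 = 0 ∧ v2 = 0 := by decide
  intro v0 v1 v2 hsum h1 h2 h3
  refine key v0 v1 v2 ⟨hsum, ?_, ?_, ?_⟩
  · by_cases h : v0 = 0
    · exact Or.inl h
    · exact Or.inr (h1 h)
  · by_cases h : v1 = 0
    · exact Or.inl h
    · exact Or.inr (h2 h)
  · by_cases h : v2 = 0
    · exact Or.inl h
    · exact Or.inr (h3 h)

lemma sec_cube {g : G3} (hg : Tri g) (hc : cc g = 0) (h3 : g ^ 3 = 1) (s : Three) :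
    (secPerm s g) ^ 3 = 1 := by
  have hked : secPerm s (g * (g * g)) = secPerm s g * (secPerm s g * secPerm s g) := by
    rw [sec_mul hg (hg.mul hg), cc_mul hg hg, hc, add_zero, rotPow_zero,
      sec_mul hg hg, hc, rotPow_zero]
  rw [cube_expand, hked.symm, ← cube_expand, h3, sec_one]

lemma no_active_case {w : List Ltr} (h3 : (evalW w) ^ 3 = 1) (hchi : chi (evalW w) = 0)
    (hc : cc (evalW w) ≠ 0) : False := by
  have hnu := cube_nu_zero (Tri_evalW w) h3 hc
  rw [chi, hnu, sub_zero] at hchi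
  exact hc hchi

theorem main_aux : ∀ (n : ℕ) (w : List Ltr), tcount w ≤ n → (evalW w) ^ 3 = 1 →
    chi (evalW w) = 0 → evalW w = 1 := by
  intro n
  induction n with
  | zero =>
    intro w hcount h3 hchi
    by_cases hc : cc (evalW w) = 0
    · have hM := eval_eq_evalC hc
      have hlen : (convert w 0).length = 0 := by rw [length_convert]; omega
      rw [List.length_eq_zero_iff] at hlen
      rw [hM, hlen, evalC_nil]
    · exact absurd (no_active_case h3 hchi hc) (not_false)
  | succ n ih =>
    intro w hcount h3 hchi
    by_cases hc : cc (evalW w) = 0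
    · have hM : evalW w = evalC (convert w 0) := eval_eq_evalC hc
      set M := convert w 0 with hMdef
      set g := evalW w with hgdef
      by_cases hall : ∃ k₀ : ZMod 3, ∀ p ∈ M, p.1 = k₀
      · obtain ⟨k₀, hk₀⟩ := hall
        rw [hM]
        exact all_equal_case hk₀ (by rw [← hM]; exact hchi)
      · have hD := Dprop_evalC M
        rw [← hM] at hD
        obtain ⟨tg, cg0, rel⟩ := hD
        have hcube : ∀ s, (secPerm s g) ^ 3 = 1 := fun s => sec_cube tg cg0 h3 s
        have hv : ∀ s, EE g [s] ≠ 0 → EE g [rot s] = 0 := by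
          intro s hvs
          have hnu : nu (secPerm s g) = 0 := by
            refine cube_nu_zero (Tri_secPerm tg s) (hcube s) ?_
            rw [cc_secPerm tg]
            exact hvs
          have hchi_s : chi (secPerm s g) = EE g [s] := by
            rw [chi, cc_secPerm tg, hnu, sub_zero]
          have hrel := rel s
          rw [hchi_s] at hrel
          linear_combination hrel
        have hnug : nu g = 0 := by
          have h' := hchi
          rw [chi, cg0, zero_sub, neg_eq_zero] at h'
          exact h'
        have hsum : EE g [Three.zero] + EE g [Three.one] + EE g [Three.two] = 0 := hnug
        obtain ⟨hv0, hv1, hv2⟩ :=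
          zmod3_vanish _ _ _ hsum (hv Three.zero) (hv Three.one) (hv Three.two)
        have hsecchi : ∀ s, chi (secPerm s g) = 0 := by
          intro s
          rw [rel s]
          cases s with
          | zero => rw [hv0, show rot Three.zero = Three.one from rfl, hv1]; ring
          | one => rw [hv1, show rot Three.one = Three.two from rfl, hv2]; ring
          | two => rw [hv2, show rot Three.two = Three.zero from rfl, hv0]; ring
        have hsec1 : ∀ s, secPerm s g = 1 := by
          intro s
          have hw_s : secPerm s g = evalW (secW s M) := by
            rw [hM]
            exact sec_evalC M s
          rw [hw_s]
          refine ih (secW s M) ?_ ?_ ?_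
          · have h1 : tcount (secW s M) < M.length := tcount_secW_lt hall
            have h2 : M.length = tcount w := by rw [hMdef, length_convert]
            omega
          · rw [← hw_s]; exact hcube s
          · rw [← hw_s]; exact hsecchi s
        exact trivial_of_secs_trivial tg cg0 hsec1
    · exact absurd (no_active_case h3 hchi hc) (not_false)

theorem fgK_torsionfree : ∀ g ∈ fgK, g ≠ 1 → ¬ IsOfFinOrder g := by
  intro g hg hne hfin
  have tg := tri_of_mem_fgGamma (fgK_le_fgGamma hg)
  obtain ⟨nn, hne', h3⟩ := exists_cube_root_problem tg hfin hne
  have hmem : g ^ nn ∈ fgK := pow_mem hg nn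
  have hchi : chi (g ^ nn) = 0 := chi_eq_zero_of_mem_fgK hmem
  obtain ⟨w, hw⟩ := exists_word (fgK_le_fgGamma hmem)
  have := main_aux (tcount w) w le_rfl (by rw [hw]; exact h3) (by rw [hw]; exact hchi)
  rw [hw] at this
  exact hne' this

/-! ### Final assembly -/

/-- In the Fabrykowski–Gupta group `Γ = ⟨a, t⟩`, the subgroup `K = ⟨at, ta⟩` is a normal
subgroup of index `3`, and `K` is torsion-free; hence `Γ` is virtually torsion-free. -/
theorem fabrykowski_gupta_virtually_torsion_free :
    fgK ≤ fgGamma ∧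
      (fgK.subgroupOf fgGamma).Normal ∧
      fgK.relIndex fgGamma = 3 ∧
      (∀ g ∈ fgK, g ≠ 1 → ¬ IsOfFinOrder g) ∧
      ∃ H : Subgroup (Equiv.Perm (List Three)), H ≤ fgGamma ∧
        H.relIndex fgGamma ≠ 0 ∧ ∀ g ∈ H, g ≠ 1 → ¬ IsOfFinOrder g := by
  refine ⟨fgK_le_fgGamma, fgK_normal_in_fgGamma, relindex_fgK, fgK_torsionfree,
    ⟨fgK, fgK_le_fgGamma, ?_, fgK_torsionfree⟩⟩
  rw [relindex_fgK]
  norm_num
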